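/- The function (1 + K_Λ)^{−1} χ_Λ is non-negative λ-almost everywhere on R, where χ_Λ is regarded as an element of L²(R;λ). -/

import Mathlib

open MeasureTheory Filter
open scoped ENNReal NNReal

noncomputable section

variable {R : Type*} [TopologicalSpace R] [T2Space R] [LocallyCompactSpace R]
  [SecondCountableTopology R] [MeasurableSpace R] [BorelSpace R]

/-- `A` has integral kernel `k` on `L²(R;λ)`. -/
def IsKernelOf {R : Type*} [MeasurableSpace R] (lam : Measure R)
    (A : Lp ℝ 2 lam →L[ℝ] Lp ℝ 2 lam) (k : R → R → ℝ) : Prop :=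
  ∀ φ : Lp ℝ 2 lam, ∀ᵐ x ∂lam, (A φ : R → ℝ) x = ∫ y, k x y * (φ : R → ℝ) y ∂lam

/-- the iterated kernels: `iterKer lam g n` is the kernel of `G^{n+1}`,
computed in `[0,∞]`. -/
def iterKer {R : Type*} [MeasurableSpace R] (lam : Measure R) (g : R → R → ℝ) :
    ℕ → R → R → ℝ≥0∞
  | 0 => fun x y => ENNReal.ofReal (g x y)
  | (n + 1) => fun x y => ∫⁻ z, iterKer lam g n x z * ENNReal.ofReal (g z y) ∂lam

section AuxSection

set_option linter.unusedSectionVars false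
set_option linter.unusedVariables false

namespace Prop1Aux

variable {R : Type*} [MeasurableSpace R] (lam : Measure R) (g : R → R → ℝ)

/-- integral operator with kernel `g`, in `ℝ≥0∞`. -/
def Gop (f : R → ℝ≥0∞) : R → ℝ≥0∞ :=
  fun x => ∫⁻ y, ENNReal.ofReal (g x y) * f y ∂lam

/-- iterates of `Gop`. -/
def powG : ℕ → (R → ℝ≥0∞) → (R → ℝ≥0∞)
  | 0, f => f
  | (n+1), f => Gop lam g (powG n f)

variable {lam g}

lemma measurable_Gop [SFinite lam] (hg : Measurable (Function.uncurry g))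
    {f : R → ℝ≥0∞} (hf : Measurable f) : Measurable (Gop lam g f) := by
  apply Measurable.lintegral_prod_right (f := fun x y => ENNReal.ofReal (g x y) * f y)
  exact (ENNReal.measurable_ofReal.comp hg).mul (hf.comp measurable_snd)

lemma measurable_powG [SFinite lam] (hg : Measurable (Function.uncurry g))
    {f : R → ℝ≥0∞} (hf : Measurable f) (n : ℕ) : Measurable (powG lam g n f) := by
  induction n with
  | zero => exact hf
  | succ n ih => exact measurable_Gop hg ih

lemma Gop_mono {f f' : R → ℝ≥0∞} (h : f ≤ f') : Gop lam g f ≤ Gop lam g f' :=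
  fun x => lintegral_mono fun y => mul_le_mul_right (h y) _

lemma powG_mono (n : ℕ) {f f' : R → ℝ≥0∞} (h : f ≤ f') : powG lam g n f ≤ powG lam g n f' := by
  induction n with
  | zero => exact h
  | succ n ih => exact Gop_mono ih

lemma Gop_le_one (hgint : ∀ x, ∫⁻ y, ENNReal.ofReal (g x y) ∂lam ≤ 1)
    {f : R → ℝ≥0∞} (h : f ≤ 1) : Gop lam g f ≤ 1 := by
  intro x
  calc Gop lam g f x ≤ ∫⁻ y, ENNReal.ofReal (g x y) * 1 ∂lam :=
        lintegral_mono fun y => mul_le_mul_right (h y) _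
    _ ≤ 1 := by simpa using hgint x

lemma Gop_add [SFinite lam] (hg : Measurable (Function.uncurry g))
    {f f' : R → ℝ≥0∞} (hf : Measurable f) :
    Gop lam g (f + f') = Gop lam g f + Gop lam g f' := by
  funext x
  simp only [Gop, Pi.add_apply, mul_add]
  rw [lintegral_add_left]
  exact (ENNReal.measurable_ofReal.comp (hg.comp (measurable_prodMk_left (x := x)))).mul hf

lemma Gop_tsum [SFinite lam] (hg : Measurable (Function.uncurry g))
    {f : ℕ → R → ℝ≥0∞} (hf : ∀ k, Measurable (f k)) :
    Gop lam g (fun x => ∑' k, f k x) = fun x => ∑' k, Gop lam g (f k) x := by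
  funext x
  simp only [Gop]
  have h1 : ∀ y, ENNReal.ofReal (g x y) * ∑' k, f k y
      = ∑' k, ENNReal.ofReal (g x y) * f k y := fun y => ENNReal.tsum_mul_left.symm
  simp_rw [h1]
  exact lintegral_tsum fun k => ((ENNReal.measurable_ofReal.comp
    (hg.comp (measurable_prodMk_left (x := x)))).mul (hf k)).aemeasurable

lemma powG_tsum [SFinite lam] (hg : Measurable (Function.uncurry g))
    {f : ℕ → R → ℝ≥0∞} (hf : ∀ k, Measurable (f k)) (n : ℕ) :
    powG lam g n (fun x => ∑' k, f k x) = fun x => ∑' k, powG lam g n (f k) x := by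
  induction n with
  | zero => rfl
  | succ n ih =>
      show Gop lam g _ = _
      rw [ih, Gop_tsum hg fun k => measurable_powG hg (hf k) n]
      rfl

lemma measurable_iterKer [SFinite lam] (hg : Measurable (Function.uncurry g)) (n : ℕ) :
    Measurable (Function.uncurry (iterKer lam g n)) := by
  induction n with
  | zero => exact ENNReal.measurable_ofReal.comp hg
  | succ n ih =>
      have : Measurable (fun q : (R × R) × R =>
          iterKer lam g n q.1.1 q.2 * ENNReal.ofReal (g q.2 q.1.2)) := by
        have h1 : Measurable (fun q : (R × R) × R => (q.1.1, q.2)) :=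
          (measurable_fst.comp measurable_fst).prodMk measurable_snd
        have h2 : Measurable (fun q : (R × R) × R => (q.2, q.1.2)) :=
          measurable_snd.prodMk (measurable_snd.comp measurable_fst)
        exact (ih.comp h1).mul ((ENNReal.measurable_ofReal.comp hg).comp h2)
      exact this.lintegral_prod_right'

lemma measurable_iterKer_left [SFinite lam] (hg : Measurable (Function.uncurry g)) (n : ℕ)
    (x : R) : Measurable (iterKer lam g n x) :=
  (measurable_iterKer hg n).comp (measurable_prodMk_left (x := x))

lemma lintegral_iterKer_le [SigmaFinite lam] (hg : Measurable (Function.uncurry g))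
    (hgint : ∀ x, ∫⁻ y, ENNReal.ofReal (g x y) ∂lam ≤ 1) (n : ℕ) (x : R) :
    ∫⁻ y, iterKer lam g n x y ∂lam ≤ 1 := by
  induction n with
  | zero => exact hgint x
  | succ n ih =>
      have hswap : ∫⁻ y, ∫⁻ z, iterKer lam g n x z * ENNReal.ofReal (g z y) ∂lam ∂lam
          = ∫⁻ z, ∫⁻ y, iterKer lam g n x z * ENNReal.ofReal (g z y) ∂lam ∂lam := by
        apply lintegral_lintegral_swap
        apply AEMeasurable.mul
        · exact ((measurable_iterKer_left hg n x).comp measurable_snd).aemeasurable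
        · exact ((ENNReal.measurable_ofReal.comp hg).comp
            (measurable_snd.prodMk measurable_fst)).aemeasurable
      show ∫⁻ y, ∫⁻ z, iterKer lam g n x z * ENNReal.ofReal (g z y) ∂lam ∂lam ≤ 1
      rw [hswap]
      calc ∫⁻ z, ∫⁻ y, iterKer lam g n x z * ENNReal.ofReal (g z y) ∂lam ∂lam
          = ∫⁻ z, iterKer lam g n x z * ∫⁻ y, ENNReal.ofReal (g z y) ∂lam ∂lam := by
            congr 1; funext z
            exact lintegral_const_mul _ (ENNReal.measurable_ofReal.comp
              (hg.comp (measurable_prodMk_left (x := z))))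
        _ ≤ ∫⁻ z, iterKer lam g n x z * 1 ∂lam :=
            lintegral_mono fun z => mul_le_mul_right (hgint z) _
        _ ≤ 1 := by simpa using ih

lemma ae_iterKer_lt_top [SigmaFinite lam] (hg : Measurable (Function.uncurry g))
    (hgint : ∀ x, ∫⁻ y, ENNReal.ofReal (g x y) ∂lam ≤ 1) (n : ℕ) (x : R) :
    ∀ᵐ y ∂lam, iterKer lam g n x y < ∞ :=
  ae_lt_top (measurable_iterKer_left hg n x)
    (lt_of_le_of_lt (lintegral_iterKer_le hg hgint n x) ENNReal.one_lt_top).ne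

lemma powG_gop (n : ℕ) (f : R → ℝ≥0∞) :
    powG lam g n (Gop lam g f) = powG lam g (n+1) f := by
  induction n with
  | zero => rfl
  | succ n ih => show Gop lam g _ = Gop lam g _; rw [ih]

lemma intK_eq_powG [SigmaFinite lam] (hg : Measurable (Function.uncurry g))
    (n : ℕ) {f : R → ℝ≥0∞} (hf : Measurable f) :
    (fun x => ∫⁻ y, iterKer lam g n x y * f y ∂lam) = powG lam g (n+1) f := by
  induction n generalizing f with
  | zero => rfl
  | succ n ih =>
      have key : (fun x => ∫⁻ y, iterKer lam g (n+1) x y * f y ∂lam)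
          = fun x => ∫⁻ y, iterKer lam g n x y * Gop lam g f y ∂lam := by
        funext x
        show ∫⁻ y, (∫⁻ z, iterKer lam g n x z * ENNReal.ofReal (g z y) ∂lam) * f y ∂lam = _
        have h1 : ∀ y, (∫⁻ z, iterKer lam g n x z * ENNReal.ofReal (g z y) ∂lam) * f y
            = ∫⁻ z, iterKer lam g n x z * ENNReal.ofReal (g z y) * f y ∂lam := by
          intro y
          have hA : Measurable fun z => iterKer lam g n x z * ENNReal.ofReal (g z y) :=
            (measurable_iterKer_left hg n x).mul
              (ENNReal.measurable_ofReal.comp (hg.comp (measurable_prodMk_right (y := y))))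
          exact (lintegral_mul_const _ hA).symm
        simp_rw [h1]
        rw [lintegral_lintegral_swap]
        · congr 1; funext z
          simp_rw [mul_assoc]
          have hB : Measurable fun w => ENNReal.ofReal (g z w) * f w :=
            (ENNReal.measurable_ofReal.comp
              (hg.comp (measurable_prodMk_left (x := z)))).mul hf
          exact lintegral_const_mul _ hB
        · apply AEMeasurable.mul
          apply AEMeasurable.mul
          · exact ((measurable_iterKer_left hg n x).comp measurable_snd).aemeasurable
          · exact ((ENNReal.measurable_ofReal.comp hg).comp
              (measurable_snd.prodMk measurable_fst)).aemeasurable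
          · exact (hf.comp measurable_fst).aemeasurable
      rw [key, ih (measurable_Gop hg hf), powG_gop]

variable (lam g) (Λ : Set R)

def chainQ : ℕ → R → ℝ≥0∞
  | 0 => Λ.indicator 1
  | (n+1) => Λᶜ.indicator (Gop lam g (chainQ n))

def Hfun : R → ℝ≥0∞ := fun x => ∑' k, chainQ lam g Λ k x

def vv (k : ℕ) : R → ℝ≥0∞ := Λ.indicator (Gop lam g (chainQ lam g Λ k))

def uu : R → ℝ≥0∞ := Λ.indicator (Gop lam g (Hfun lam g Λ))

variable {lam g}



variable {Λ : Set R}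

lemma measurable_chainQ [SFinite lam] (hg : Measurable (Function.uncurry g))
    (hΛm : MeasurableSet Λ) (n : ℕ) : Measurable (chainQ lam g Λ n) := by
  induction n with
  | zero => exact measurable_one.indicator hΛm
  | succ n ih => exact (measurable_Gop hg ih).indicator hΛm.compl

lemma measurable_Hfun [SFinite lam] (hg : Measurable (Function.uncurry g))
    (hΛm : MeasurableSet Λ) : Measurable (Hfun lam g Λ) :=
  Measurable.ennreal_tsum fun k => measurable_chainQ hg hΛm k

lemma measurable_vv [SFinite lam] (hg : Measurable (Function.uncurry g))
    (hΛm : MeasurableSet Λ) (k : ℕ) : Measurable (vv lam g Λ k) :=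
  (measurable_Gop hg (measurable_chainQ hg hΛm k)).indicator hΛm

lemma measurable_uu [SFinite lam] (hg : Measurable (Function.uncurry g))
    (hΛm : MeasurableSet Λ) : Measurable (uu lam g Λ) :=
  (measurable_Gop hg (measurable_Hfun hg hΛm)).indicator hΛm

lemma Gop_sum [SFinite lam] (hg : Measurable (Function.uncurry g))
    (s : Finset ℕ) {f : ℕ → R → ℝ≥0∞} (hf : ∀ k, Measurable (f k)) :
    Gop lam g (fun x => ∑ k ∈ s, f k x) = fun x => ∑ k ∈ s, Gop lam g (f k) x := by
  funext x
  simp only [Gop, Finset.mul_sum]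
  exact lintegral_finset_sum s fun k _ => (ENNReal.measurable_ofReal.comp
    (hg.comp (measurable_prodMk_left (x := x)))).mul (hf k)

lemma sum_chainQ_le_one [SFinite lam] (hg : Measurable (Function.uncurry g))
    (hΛm : MeasurableSet Λ)
    (hgint : ∀ x, ∫⁻ y, ENNReal.ofReal (g x y) ∂lam ≤ 1) (n : ℕ) :
    (fun x => ∑ k ∈ Finset.range n, chainQ lam g Λ k x) ≤ 1 := by
  induction n with
  | zero => intro x; simp
  | succ n ih =>
      intro x
      show ∑ k ∈ Finset.range (n+1), chainQ lam g Λ k x ≤ 1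
      rw [Finset.sum_range_succ']
      have h1 : ∀ i, chainQ lam g Λ (i+1) x
          = Λᶜ.indicator (Gop lam g (chainQ lam g Λ i)) x := fun i => rfl
      simp_rw [h1]
      by_cases hx : x ∈ Λ
      · rw [Finset.sum_eq_zero fun i _ => Set.indicator_of_notMem (by simpa using hx) _]
        simp [chainQ, Set.indicator_of_mem hx]
      · have h2 : ∀ i, Λᶜ.indicator (Gop lam g (chainQ lam g Λ i)) x
            = Gop lam g (chainQ lam g Λ i) x :=
          fun i => Set.indicator_of_mem (by simpa using hx) _
        simp_rw [h2]
        have h3 : chainQ lam g Λ 0 x = 0 := Set.indicator_of_notMem hx _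
        rw [h3, add_zero]
        have h4 := congrFun (Gop_sum (lam := lam) hg (Finset.range n)
          (f := fun k => chainQ lam g Λ k)
          (fun k => measurable_chainQ hg hΛm k)) x
        rw [← h4]
        exact Gop_le_one hgint ih x

lemma Hfun_le_one [SFinite lam] (hg : Measurable (Function.uncurry g))
    (hΛm : MeasurableSet Λ)
    (hgint : ∀ x, ∫⁻ y, ENNReal.ofReal (g x y) ∂lam ≤ 1) :
    Hfun lam g Λ ≤ 1 := by
  intro x
  rw [Hfun, ENNReal.tsum_eq_iSup_nat]
  exact iSup_le fun n => sum_chainQ_le_one hg hΛm hgint n x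

lemma uu_le_indicator [SFinite lam] (hg : Measurable (Function.uncurry g))
    (hΛm : MeasurableSet Λ)
    (hgint : ∀ x, ∫⁻ y, ENNReal.ofReal (g x y) ∂lam ≤ 1) :
    uu lam g Λ ≤ Λ.indicator 1 := by
  intro x
  by_cases hx : x ∈ Λ
  · rw [uu, Set.indicator_of_mem hx, Set.indicator_of_mem hx]
    exact Gop_le_one hgint (Hfun_le_one hg hΛm hgint) x
  · rw [uu, Set.indicator_of_notMem hx, Set.indicator_of_notMem hx]

lemma tsum_vv [SFinite lam] (hg : Measurable (Function.uncurry g))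
    (hΛm : MeasurableSet Λ) (x : R) :
    ∑' k, vv lam g Λ k x = uu lam g Λ x := by
  by_cases hx : x ∈ Λ
  · have h1 : ∀ k, vv lam g Λ k x = Gop lam g (chainQ lam g Λ k) x :=
      fun k => Set.indicator_of_mem hx _
    simp_rw [h1]
    rw [uu, Set.indicator_of_mem hx]
    exact (congrFun (Gop_tsum hg fun k => measurable_chainQ hg hΛm k) x).symm
  · have h1 : ∀ k, vv lam g Λ k x = 0 := fun k => Set.indicator_of_notMem hx _
    simp_rw [h1]
    rw [uu, Set.indicator_of_notMem hx]
    simp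

lemma star_identity [SFinite lam] (hg : Measurable (Function.uncurry g))
    (hΛm : MeasurableSet Λ) (m : ℕ) :
    powG lam g (m+1) (Λ.indicator 1)
      = (fun x => ∑ k ∈ Finset.range (m+1), powG lam g (m-k) (vv lam g Λ k) x)
        + chainQ lam g Λ (m+1) := by
  induction m with
  | zero =>
      funext x
      show Gop lam g (chainQ lam g Λ 0) x
        = (∑ k ∈ Finset.range 1, powG lam g (0-k) (vv lam g Λ k) x) + chainQ lam g Λ 1 x
      rw [Finset.sum_range_one]
      show Gop lam g (chainQ lam g Λ 0) x
        = Λ.indicator (Gop lam g (chainQ lam g Λ 0)) x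
          + Λᶜ.indicator (Gop lam g (chainQ lam g Λ 0)) x
      exact (congrFun (Set.indicator_self_add_compl Λ
        (Gop lam g (chainQ lam g Λ 0))) x).symm
  | succ m ih =>
      have hmeas : Measurable (fun x =>
          ∑ k ∈ Finset.range (m+1), powG lam g (m-k) (vv lam g Λ k) x) :=
        Finset.measurable_sum _ fun k _ => (measurable_powG hg (measurable_vv hg hΛm k) _).comp measurable_id
      have step1 : powG lam g (m+2) (Λ.indicator 1)
          = Gop lam g ((fun x => ∑ k ∈ Finset.range (m+1),
              powG lam g (m-k) (vv lam g Λ k) x) + chainQ lam g Λ (m+1)) := by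
        show Gop lam g (powG lam g (m+1) (Λ.indicator 1)) = _
        rw [ih]
      rw [step1, Gop_add hg hmeas]
      funext x
      simp only [Pi.add_apply]
      have h2 : Gop lam g (fun x => ∑ k ∈ Finset.range (m+1),
            powG lam g (m-k) (vv lam g Λ k) x) x
          = ∑ k ∈ Finset.range (m+1), Gop lam g (powG lam g (m-k) (vv lam g Λ k)) x := by
        rw [Gop_sum hg _ fun k => measurable_powG hg (measurable_vv hg hΛm k) _]
      rw [h2]
      have h3 : ∀ k ∈ Finset.range (m+1),
          Gop lam g (powG lam g (m-k) (vv lam g Λ k)) x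
            = powG lam g (m+1-k) (vv lam g Λ k) x := by
        intro k hk
        have hkm : k ≤ m := Nat.lt_succ_iff.mp (Finset.mem_range.mp hk)
        have : m + 1 - k = (m - k) + 1 := by omega
        rw [this]
        rfl
      rw [Finset.sum_congr rfl h3]
      have h4 : Gop lam g (chainQ lam g Λ (m+1)) x
          = vv lam g Λ (m+1) x + chainQ lam g Λ (m+2) x := by
        have := congrFun (Set.indicator_self_add_compl Λ
          (Gop lam g (chainQ lam g Λ (m+1)))) x
        rw [← this]; rfl
      rw [h4]
      conv_rhs => rw [Finset.sum_range_succ]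
      have h5 : m + 1 - (m + 1) = 0 := Nat.sub_self _
      rw [h5]
      have h6 : powG lam g 0 (vv lam g Λ (m+1)) x = vv lam g Λ (m+1) x := rfl
      rw [h6]
      ring

lemma tsum_triangle (a : ℕ → ℕ → ℝ≥0∞) :
    ∑' m, ∑ k ∈ Finset.range (m+1), a k (m-k) = ∑' i, ∑' j, a i j := by
  have e1 : (∑' (i:ℕ), ∑' (j:ℕ), a i j) = ∑' (p : ℕ × ℕ), a p.1 p.2 :=
    (ENNReal.tsum_prod' (f := fun p : ℕ × ℕ => a p.1 p.2)).symm
  have e2 : (∑' (p : ℕ × ℕ), a p.1 p.2)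
      = ∑' (q : Σ n : ℕ, (Finset.HasAntidiagonal.antidiagonal n : Finset (ℕ × ℕ))),
          a ((Finset.HasAntidiagonal.sigmaAntidiagonalEquivProd q : ℕ × ℕ)).1
            ((Finset.HasAntidiagonal.sigmaAntidiagonalEquivProd q : ℕ × ℕ)).2 :=
    (Finset.HasAntidiagonal.sigmaAntidiagonalEquivProd.tsum_eq (fun p : ℕ × ℕ => a p.1 p.2)).symm
  have e3 : (∑' (q : Σ n : ℕ, (Finset.HasAntidiagonal.antidiagonal n : Finset (ℕ × ℕ))),
        a ((Finset.HasAntidiagonal.sigmaAntidiagonalEquivProd q : ℕ × ℕ)).1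
          ((Finset.HasAntidiagonal.sigmaAntidiagonalEquivProd q : ℕ × ℕ)).2)
      = ∑' (m : ℕ), ∑' (p : (Finset.HasAntidiagonal.antidiagonal m : Finset (ℕ × ℕ))),
          a (p : ℕ × ℕ).1 (p : ℕ × ℕ).2 :=
    ENNReal.tsum_sigma' _
  have e4 : ∀ m : ℕ, (∑' (p : (Finset.HasAntidiagonal.antidiagonal m : Finset (ℕ × ℕ))),
      a (p : ℕ × ℕ).1 (p : ℕ × ℕ).2) = ∑ k ∈ Finset.range (m+1), a k (m-k) := by
    intro m
    rw [Finset.tsum_subtype (Finset.HasAntidiagonal.antidiagonal m) (fun p => a p.1 p.2)]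
    exact Finset.Nat.sum_antidiagonal_eq_sum_range_succ (fun i j => a i j) m
  rw [e1, e2, e3]
  exact tsum_congr fun m => (e4 m).symm

lemma identityA [SFinite lam] (hg : Measurable (Function.uncurry g))
    (hΛm : MeasurableSet Λ) {x : R} (hx : x ∈ Λ) :
    ∑' m, powG lam g (m+1) (Λ.indicator 1) x
      = uu lam g Λ x + ∑' m, powG lam g (m+1) (uu lam g Λ) x := by
  have h1 : ∀ m, powG lam g (m+1) (Λ.indicator 1) x
      = ∑ k ∈ Finset.range (m+1), powG lam g (m-k) (vv lam g Λ k) x := by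
    intro m
    have := congrFun (star_identity (lam := lam) hg hΛm m) x
    rw [this]
    have : chainQ lam g Λ (m+1) x = 0 := Set.indicator_of_notMem (by simpa using hx) _
    simp [this]
  calc ∑' m, powG lam g (m+1) (Λ.indicator 1) x
      = ∑' m, ∑ k ∈ Finset.range (m+1), powG lam g (m-k) (vv lam g Λ k) x :=
        tsum_congr h1
    _ = ∑' i, ∑' j, powG lam g j (vv lam g Λ i) x :=
        tsum_triangle (fun i j => powG lam g j (vv lam g Λ i) x)
    _ = ∑' j, ∑' i, powG lam g j (vv lam g Λ i) x := ENNReal.tsum_comm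
    _ = ∑' j, powG lam g j (uu lam g Λ) x := by
        apply tsum_congr
        intro j
        have huu : (fun x => ∑' k, vv lam g Λ k x) = uu lam g Λ :=
          funext (tsum_vv hg hΛm)
        rw [← huu]
        exact (congrFun (powG_tsum (lam := lam) hg
          (f := fun k => vv lam g Λ k) (fun k => measurable_vv hg hΛm k) j) x).symm
    _ = uu lam g Λ x + ∑' m, powG lam g (m+1) (uu lam g Λ) x := by
        rw [tsum_eq_zero_add' ENNReal.summable]
        rfl

lemma powG_le_one (hgint : ∀ x, ∫⁻ y, ENNReal.ofReal (g x y) ∂lam ≤ 1)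
    {f : R → ℝ≥0∞} (hf : f ≤ 1) : ∀ n, powG lam g n f ≤ 1
  | 0 => hf
  | (n+1) => Gop_le_one hgint (powG_le_one hgint hf n)

/-- indicator of `1` is `≤ 1`. -/
lemma indicator_one_le_one {Λ : Set R} : (Λ.indicator 1 : R → ℝ≥0∞) ≤ 1 := by
  intro x
  classical
  by_cases hx : x ∈ Λ <;>
    simp [Set.indicator_of_mem, Set.indicator_of_notMem, hx]

lemma powG_sub [SigmaFinite lam] (hg : Measurable (Function.uncurry g))
    (hgint : ∀ x, ∫⁻ y, ENNReal.ofReal (g x y) ∂lam ≤ 1)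
    {Λ : Set R} (hΛm : MeasurableSet Λ)
    {w : R → ℝ≥0∞} (hw : Measurable w) (hwle : w ≤ Λ.indicator 1) (m : ℕ) (x : R) :
    powG lam g (m+1) (fun y => Λ.indicator 1 y - w y) x
      = powG lam g (m+1) (Λ.indicator 1) x - powG lam g (m+1) w x := by
  have hχm : Measurable (Λ.indicator 1 : R → ℝ≥0∞) := measurable_one.indicator hΛm
  rw [← congrFun (intK_eq_powG hg m (f := fun y => Λ.indicator 1 y - w y) (hχm.sub hw)) x,
    ← congrFun (intK_eq_powG hg m hχm) x, ← congrFun (intK_eq_powG hg m hw) x]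
  have hfin : ∫⁻ y, iterKer lam g m x y * w y ∂lam ≠ ∞ := by
    apply ne_of_lt
    calc ∫⁻ y, iterKer lam g m x y * w y ∂lam
        ≤ ∫⁻ y, iterKer lam g m x y * 1 ∂lam :=
          lintegral_mono fun y => mul_le_mul_right (le_trans (hwle y)
            (indicator_one_le_one y)) _
      _ ≤ 1 := by simpa using lintegral_iterKer_le hg hgint m x
      _ < ∞ := ENNReal.one_lt_top
  have hsplit : ∫⁻ y, iterKer lam g m x y * (Λ.indicator 1 y - w y) ∂lam
      = ∫⁻ y, (iterKer lam g m x y * Λ.indicator 1 y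
          - iterKer lam g m x y * w y) ∂lam := by
    apply lintegral_congr_ae
    filter_upwards [ae_iterKer_lt_top hg hgint m x] with y hy
    exact ENNReal.mul_sub fun _ _ => hy.ne
  rw [hsplit]
  rw [lintegral_sub (g := fun y => iterKer lam g m x y * w y) ((measurable_iterKer_left hg m x).mul hw) hfin
    (Eventually.of_forall fun y => mul_le_mul_right (hwle y) _)]

lemma ofReal_indicator_mul (Λ : Set R) (r : R → ℝ) (hsupp : ∀ y, y ∉ Λ → r y = 0) (y : R) :
    ENNReal.ofReal ((Λ.indicator 1 : R → ℝ) y * r y) = ENNReal.ofReal (r y) := by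
  by_cases hy : y ∈ Λ
  · rw [Set.indicator_of_mem hy]; simp
  · rw [Set.indicator_of_notMem hy, hsupp y hy]; simp

lemma Sn_rep_aux [SigmaFinite lam] (hg : Measurable (Function.uncurry g))
    (hgint : ∀ x, ∫⁻ y, ENNReal.ofReal (g x y) ∂lam ≤ 1)
    {Λ : Set R} (hΛm : MeasurableSet Λ)
    {r : R → ℝ} (hr : Measurable r) (hr0 : ∀ y, 0 ≤ r y)
    (hsupp : ∀ y, y ∉ Λ → r y = 0) (n : ℕ) (x : R) :
    ∫ y, ((Λ.indicator 1 : R → ℝ) x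
        * (∑ j ∈ Finset.range n, (iterKer lam g j x y).toReal)
        * (Λ.indicator 1 : R → ℝ) y) * r y ∂lam
      = ((Λ.indicator 1 : R → ℝ≥0∞) x * ∑ j ∈ Finset.range n,
          powG lam g (j+1) (fun y => ENNReal.ofReal (r y)) x).toReal := by
  by_cases hx : x ∈ Λ
  · rw [Set.indicator_of_mem hx, Set.indicator_of_mem hx]
    simp only [Pi.one_apply, one_mul]
    have hint_nn : 0 ≤ᵐ[lam] fun y =>
        (∑ j ∈ Finset.range n, (iterKer lam g j x y).toReal)
          * (Λ.indicator 1 : R → ℝ) y * r y := by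
      apply Eventually.of_forall
      intro y
      apply mul_nonneg (mul_nonneg (Finset.sum_nonneg fun j _ => ENNReal.toReal_nonneg) _)
        (hr0 y)
      exact Set.indicator_apply_nonneg fun _ => zero_le_one
    have hint_meas : AEStronglyMeasurable (fun y =>
        (∑ j ∈ Finset.range n, (iterKer lam g j x y).toReal)
          * (Λ.indicator 1 : R → ℝ) y * r y) lam := by
      apply Measurable.aestronglyMeasurable
      exact ((Finset.measurable_sum _ fun j _ =>
        (measurable_iterKer_left hg j x).ennreal_toReal).mul
        (measurable_one.indicator hΛm)).mul hr
    rw [integral_eq_lintegral_of_nonneg_ae hint_nn hint_meas]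
    congr 1
    have hae : ∀ᵐ y ∂lam, ∀ j : ℕ, j ∈ Finset.range n → iterKer lam g j x y < ∞ := by
      rw [ae_all_iff]
      intro j
      filter_upwards [ae_iterKer_lt_top hg hgint j x] with y hy
      exact fun _ => hy
    have hstep : ∀ᵐ y ∂lam,
        ENNReal.ofReal ((∑ j ∈ Finset.range n, (iterKer lam g j x y).toReal)
            * (Λ.indicator 1 : R → ℝ) y * r y)
          = ∑ j ∈ Finset.range n, iterKer lam g j x y * ENNReal.ofReal (r y) := by
      filter_upwards [hae] with y hy
      rw [mul_assoc, ENNReal.ofReal_mul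
        (Finset.sum_nonneg fun j _ => ENNReal.toReal_nonneg)]
      rw [ofReal_indicator_mul Λ r hsupp y]
      rw [ENNReal.ofReal_sum_of_nonneg fun j _ => ENNReal.toReal_nonneg]
      rw [Finset.sum_mul]
      exact Finset.sum_congr rfl fun j hj => by
        rw [ENNReal.ofReal_toReal (hy j hj).ne]
    rw [lintegral_congr_ae hstep]
    have hmeas2 : ∀ j ∈ Finset.range n,
        Measurable fun y => iterKer lam g j x y * ENNReal.ofReal (r y) := fun j _ =>
      (measurable_iterKer_left hg j x).mul (ENNReal.measurable_ofReal.comp hr)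
    rw [lintegral_finset_sum _ hmeas2]
    apply Finset.sum_congr rfl
    intro j _
    exact congrFun (intK_eq_powG hg j (ENNReal.measurable_ofReal.comp hr)) x
  · rw [Set.indicator_of_notMem hx, Set.indicator_of_notMem hx]
    simp


end Prop1Aux

end AuxSection
/-- Proposition 1(iv): `(1+K_Λ)^{-1}χ_Λ ≥ 0` `λ`-a.e., where `χ_Λ ∈ L²(R;λ)`. -/
theorem inv_one_add_KLambda_indicator_nonneg
    (lam : Measure R) [lam.Regular] [SigmaFinite lam]
    (G : Lp ℝ 2 lam →L[ℝ] Lp ℝ 2 lam) (g : R → R → ℝ)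
    (hGsa : IsSelfAdjoint G)
    (hGpos : ∀ φ : Lp ℝ 2 lam, 0 ≤ (inner ℝ φ (G φ) : ℝ))
    (hGle1 : ∀ φ : Lp ℝ 2 lam, (inner ℝ φ (G φ) : ℝ) ≤ (inner ℝ φ φ : ℝ))
    (hgmeas : Measurable (Function.uncurry g))
    (hgker : IsKernelOf lam G g)
    (hgpos : ∀ x y, 0 ≤ g x y) (hgsymm : ∀ x y, g x y = g y x)
    (hgint : ∀ x, ∫⁻ y, ENNReal.ofReal (g x y) ∂lam ≤ 1)
    (Λ : Set R) (hΛm : MeasurableSet Λ) (hΛb : IsCompact (closure Λ))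
    (hΛfin : lam Λ ≠ ∞)
    -- the partial sums `S n = Σ_{k=1}^n χ_Λ G^k χ_Λ`, uniformly bounded, with
    -- strong limit `K_Λ`:
    (S : ℕ → (Lp ℝ 2 lam →L[ℝ] Lp ℝ 2 lam))
    (hSker : ∀ n, IsKernelOf lam (S n) (fun x y =>
      Λ.indicator 1 x *
        (∑ j ∈ Finset.range n, (iterKer lam g j x y).toReal) * Λ.indicator 1 y))
    (hSbdd : ∃ C : ℝ, ∀ n, ‖S n‖ ≤ C)
    (KΛ : Lp ℝ 2 lam →L[ℝ] Lp ℝ 2 lam)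
    (hKΛ : ∀ φ : Lp ℝ 2 lam, Tendsto (fun n => S n φ) atTop (nhds (KΛ φ)))
    (hKΛsa : IsSelfAdjoint KΛ)
    (hKΛpos : ∀ φ : Lp ℝ 2 lam, 0 ≤ (inner ℝ φ (KΛ φ) : ℝ))
    -- `J = (1+K_Λ)^{-1}`:
    (J : Lp ℝ 2 lam →L[ℝ] Lp ℝ 2 lam)
    (hJl : J.comp (1 + KΛ) = 1) (hJr : (1 + KΛ).comp J = 1) :
    ∀ᵐ x ∂lam, 0 ≤ (J (indicatorConstLp 2 hΛm hΛfin (1 : ℝ)) : R → ℝ) x := by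
  classical
  obtain ⟨C, hC⟩ := hSbdd
  have hg := hgmeas
  set u : R → ℝ≥0∞ := Prop1Aux.uu lam g Λ with hu_def
  have humeas : Measurable u := Prop1Aux.measurable_uu hg hΛm
  have huind : u ≤ Λ.indicator 1 := Prop1Aux.uu_le_indicator hg hΛm hgint
  have hu1 : ∀ x, u x ≤ 1 := fun x => le_trans (huind x) (Prop1Aux.indicator_one_le_one x)
  have hune : ∀ x, u x ≠ ∞ := fun x => (lt_of_le_of_lt (hu1 x) ENNReal.one_lt_top).ne
  have hχm : Measurable (Λ.indicator 1 : R → ℝ≥0∞) := measurable_one.indicator hΛm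
  -- the candidate function `ρ = χ_Λ - u` (pointwise, real-valued)
  set ρ : R → ℝ := fun x => ((Λ.indicator 1 : R → ℝ≥0∞) x - u x).toReal with hρ_def
  have hρmeas : Measurable ρ := (hχm.sub humeas).ennreal_toReal
  have hρ0 : ∀ x, 0 ≤ ρ x := fun _ => ENNReal.toReal_nonneg
  have hρsupp : ∀ y, y ∉ Λ → ρ y = 0 := by
    intro y hy
    have h1 : (Λ.indicator 1 : R → ℝ≥0∞) y = 0 := Set.indicator_of_notMem hy _
    simp [hρ_def, h1, zero_tsub]
  have hsub_le_one : ∀ x, (Λ.indicator 1 : R → ℝ≥0∞) x - u x ≤ 1 :=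
    fun x => le_trans tsub_le_self (Prop1Aux.indicator_one_le_one x)
  have hsub_ne : ∀ x, (Λ.indicator 1 : R → ℝ≥0∞) x - u x ≠ ∞ :=
    fun x => (lt_of_le_of_lt (hsub_le_one x) ENNReal.one_lt_top).ne
  have hρle : ∀ x, ρ x ≤ (Λ.indicator (fun _ => (1:ℝ)) : R → ℝ) x := by
    intro x
    by_cases hx : x ∈ Λ
    · rw [Set.indicator_of_mem hx]
      have h2 := ENNReal.toReal_mono ENNReal.one_ne_top (hsub_le_one x)
      simpa using h2
    · rw [Set.indicator_of_notMem hx, hρsupp x hx]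
  have hmem : MemLp ρ 2 lam := by
    have hind : MemLp (Λ.indicator fun _ => (1:ℝ)) 2 lam :=
      memLp_indicator_const 2 hΛm (1:ℝ) (Or.inr hΛfin)
    apply hind.of_le hρmeas.aestronglyMeasurable
    apply Eventually.of_forall
    intro x
    rw [Real.norm_of_nonneg (hρ0 x)]
    exact le_trans (hρle x) (le_abs_self _)
  set Ψ : Lp ℝ 2 lam := hmem.toLp ρ with hΨ_def
  have hΨcoe : (Ψ : R → ℝ) =ᵐ[lam] ρ := hmem.coeFn_toLp
  set χL : Lp ℝ 2 lam := indicatorConstLp 2 hΛm hΛfin (1 : ℝ) with hχL_def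
  have hχcoe : (χL : R → ℝ) =ᵐ[lam] Λ.indicator fun _ => (1:ℝ) := indicatorConstLp_coeFn
  have hofρ : (fun y => ENNReal.ofReal (ρ y))
      = fun y => (Λ.indicator 1 : R → ℝ≥0∞) y - u y :=
    funext fun y => ENNReal.ofReal_toReal (hsub_ne y)
  have hofind : (fun y => ENNReal.ofReal ((Λ.indicator fun _ => (1:ℝ)) y))
      = (Λ.indicator 1 : R → ℝ≥0∞) := by
    funext y
    by_cases hy : y ∈ Λ <;>
      simp [Set.indicator_of_mem, Set.indicator_of_notMem, hy]
  -- a.e. pointwise formula for `S n φ` in terms of the iterated kernels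
  have hSf : ∀ (φ : Lp ℝ 2 lam) (rr : R → ℝ), Measurable rr → (∀ y, 0 ≤ rr y) →
      (∀ y, y ∉ Λ → rr y = 0) → ((φ : R → ℝ) =ᵐ[lam] rr) → ∀ n,
      ∀ᵐ x ∂lam, (S n φ : R → ℝ) x
        = ((Λ.indicator 1 : R → ℝ≥0∞) x * ∑ j ∈ Finset.range n,
            Prop1Aux.powG lam g (j+1) (fun y => ENNReal.ofReal (rr y)) x).toReal := by
    intro φ rr hmr h0r hsr hcoe n
    filter_upwards [hSker n φ] with x hx
    rw [hx]
    have hcongr : ∫ y, (Λ.indicator 1 x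
          * (∑ j ∈ Finset.range n, (iterKer lam g j x y).toReal)
          * Λ.indicator 1 y) * (φ : R → ℝ) y ∂lam
        = ∫ y, (Λ.indicator 1 x
          * (∑ j ∈ Finset.range n, (iterKer lam g j x y).toReal)
          * Λ.indicator 1 y) * rr y ∂lam := by
      apply integral_congr_ae
      filter_upwards [hcoe] with y hy
      rw [hy]
    rw [hcongr]
    exact Prop1Aux.Sn_rep_aux hg hgint hΛm hmr h0r hsr n x
  have hSΨ : ∀ n, ∀ᵐ x ∂lam, (S n Ψ : R → ℝ) x
      = ((Λ.indicator 1 : R → ℝ≥0∞) x * ∑ j ∈ Finset.range n,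
          Prop1Aux.powG lam g (j+1)
            (fun y => (Λ.indicator 1 : R → ℝ≥0∞) y - u y) x).toReal := by
    intro n
    have := hSf Ψ ρ hρmeas hρ0 hρsupp hΨcoe n
    rw [hofρ] at this
    exact this
  have hSχ : ∀ n, ∀ᵐ x ∂lam, (S n χL : R → ℝ) x
      = ((Λ.indicator 1 : R → ℝ≥0∞) x * ∑ j ∈ Finset.range n,
          Prop1Aux.powG lam g (j+1) (Λ.indicator 1) x).toReal := by
    intro n
    have hmr : Measurable (Λ.indicator fun _ => (1:ℝ)) := measurable_const.indicator hΛm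
    have h0r : ∀ y, 0 ≤ (Λ.indicator fun _ => (1:ℝ)) y :=
      fun y => Set.indicator_apply_nonneg fun _ => zero_le_one
    have hsr : ∀ y, y ∉ Λ → (Λ.indicator fun _ => (1:ℝ)) y = 0 :=
      fun y hy => Set.indicator_of_notMem hy _
    have := hSf χL (Λ.indicator fun _ => (1:ℝ)) hmr h0r hsr hχcoe n
    rw [hofind] at this
    exact this
  -- uniform bound gives a.e. finiteness of the total series
  set Tb : ℕ → R → ℝ≥0∞ := fun n x => (Λ.indicator 1 : R → ℝ≥0∞) x
      * ∑ j ∈ Finset.range n, Prop1Aux.powG lam g (j+1) (Λ.indicator 1) x with hTb_def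
  have hpow_le_one : ∀ j x, Prop1Aux.powG lam g (j+1) (Λ.indicator 1 : R → ℝ≥0∞) x ≤ 1 :=
    fun j x => Prop1Aux.powG_le_one hgint Prop1Aux.indicator_one_le_one (j+1) x
  have hTbmeas : ∀ n, Measurable (Tb n) := by
    intro n
    apply hχm.mul
    exact Finset.measurable_sum _ fun j _ => Prop1Aux.measurable_powG hg hχm (j+1)
  have hTb_le : ∀ n x, Tb n x ≤ Λ.indicator (fun _ => (n : ℝ≥0∞)) x := by
    intro n x
    by_cases hx : x ∈ Λ
    · rw [hTb_def]
      simp only [Set.indicator_of_mem hx, Pi.one_apply, one_mul]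
      calc ∑ j ∈ Finset.range n, Prop1Aux.powG lam g (j+1) (Λ.indicator 1) x
          ≤ ∑ _j ∈ Finset.range n, 1 := Finset.sum_le_sum fun j _ => hpow_le_one j x
        _ = n := by simp
    · rw [hTb_def]
      simp [Set.indicator_of_notMem hx]
  have hTb_int : ∀ n, ∫⁻ x, Tb n x ∂lam ≤ (n : ℝ≥0∞) * lam Λ := by
    intro n
    calc ∫⁻ x, Tb n x ∂lam ≤ ∫⁻ x, Λ.indicator (fun _ => (n : ℝ≥0∞)) x ∂lam :=
          lintegral_mono (hTb_le n)
      _ = (n : ℝ≥0∞) * lam Λ := by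
          rw [lintegral_indicator hΛm]
          simp [mul_comm]
  have hTb_int_ne : ∀ n, ∫⁻ x, Tb n x ∂lam ≠ ∞ := by
    intro n
    exact (lt_of_le_of_lt (hTb_int n)
      (ENNReal.mul_lt_top (ENNReal.natCast_lt_top n) (lt_top_iff_ne_top.mpr hΛfin))).ne
  have hTb_fin : ∀ n x, Tb n x < ∞ := by
    intro n x
    refine lt_of_le_of_lt (hTb_le n x) ?_
    by_cases hx : x ∈ Λ <;>
      simp [Set.indicator_of_mem, Set.indicator_of_notMem, hx, ENNReal.natCast_lt_top]
  have hTb_bound : ∀ n, ∫⁻ x, Tb n x ∂lam ≤ ENNReal.ofReal (C * (‖χL‖ * ‖χL‖)) := by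
    intro n
    have h1 : ∫ x, (Tb n x).toReal ∂lam = (∫⁻ x, Tb n x ∂lam).toReal :=
      integral_toReal (hTbmeas n).aemeasurable (Eventually.of_forall fun x => hTb_fin n x)
    have h2 : (fun x => (Tb n x).toReal)
        =ᵐ[lam] fun x => (S n χL : R → ℝ) x * (χL : R → ℝ) x := by
      filter_upwards [hSχ n, hχcoe] with x hx1 hx2
      rw [hx2, hx1]
      by_cases hx : x ∈ Λ
      · simp [hTb_def, Set.indicator_of_mem hx]
      · simp [hTb_def, Set.indicator_of_notMem hx]
    have h3 : ∫ x, (Tb n x).toReal ∂lam = (inner ℝ (S n χL) χL : ℝ) := by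
      rw [integral_congr_ae h2, L2.inner_def]
      try simp [RCLike.inner_apply, mul_comm]
    have h4 : (inner ℝ (S n χL) χL : ℝ) ≤ C * (‖χL‖ * ‖χL‖) := by
      calc (inner ℝ (S n χL) χL : ℝ) ≤ ‖S n χL‖ * ‖χL‖ := real_inner_le_norm _ _
        _ ≤ (C * ‖χL‖) * ‖χL‖ := by
            apply mul_le_mul_of_nonneg_right _ (norm_nonneg _)
            exact le_trans ((S n).le_opNorm χL)
              (mul_le_mul_of_nonneg_right (hC n) (norm_nonneg _))
        _ = C * (‖χL‖ * ‖χL‖) := by ring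
    rw [← ENNReal.ofReal_toReal (hTb_int_ne n)]
    apply ENNReal.ofReal_le_ofReal
    rw [← h1, h3]
    exact h4
  have hTbmono : ∀ x, Monotone fun n => Tb n x := by
    intro x n m hnm
    rw [hTb_def]
    exact mul_le_mul_right (Finset.sum_le_sum_of_subset
      (Finset.range_subset_range.mpr hnm)) _
  set Tfull : R → ℝ≥0∞ := fun x => (Λ.indicator 1 : R → ℝ≥0∞) x
      * ∑' m, Prop1Aux.powG lam g (m+1) (Λ.indicator 1) x with hTfull_def
  have hTfull_sup : ∀ x, Tfull x = ⨆ n, Tb n x := by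
    intro x
    have h7 : Tfull x = (Λ.indicator 1 : R → ℝ≥0∞) x
        * ∑' m, Prop1Aux.powG lam g (m+1) (Λ.indicator 1) x := rfl
    rw [h7, ENNReal.tsum_eq_iSup_nat, ENNReal.mul_iSup]
  have hTfull_meas : Measurable Tfull := by
    apply hχm.mul
    exact Measurable.ennreal_tsum fun m => Prop1Aux.measurable_powG hg hχm (m+1)
  have hTfull_int : ∫⁻ x, Tfull x ∂lam ≤ ENNReal.ofReal (C * (‖χL‖ * ‖χL‖)) := by
    have : ∫⁻ x, Tfull x ∂lam = ⨆ n, ∫⁻ x, Tb n x ∂lam := by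
      rw [show Tfull = fun x => ⨆ n, Tb n x from funext hTfull_sup]
      exact lintegral_iSup hTbmeas fun n m hnm x => hTbmono x hnm
    rw [this]
    exact iSup_le hTb_bound
  have hTfull_ae : ∀ᵐ x ∂lam, Tfull x < ∞ :=
    ae_lt_top hTfull_meas (lt_of_le_of_lt hTfull_int ENNReal.ofReal_lt_top).ne
  -- a.e. pointwise convergence of `S n Ψ` to `u.toReal`
  have hptlim : ∀ᵐ x ∂lam, Tendsto (fun n => (S n Ψ : R → ℝ) x) atTop
      (nhds ((u x).toReal)) := by
    have hall : ∀ᵐ x ∂lam, ∀ n, (S n Ψ : R → ℝ) x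
        = ((Λ.indicator 1 : R → ℝ≥0∞) x * ∑ j ∈ Finset.range n,
            Prop1Aux.powG lam g (j+1)
              (fun y => (Λ.indicator 1 : R → ℝ≥0∞) y - u y) x).toReal :=
      ae_all_iff.mpr hSΨ
    filter_upwards [hTfull_ae, hall] with x hxT hxS
    by_cases hx : x ∈ Λ
    · have hχx : (Λ.indicator 1 : R → ℝ≥0∞) x = 1 := Set.indicator_of_mem hx _
      have hux : u x = Λ.indicator (Prop1Aux.Gop lam g (Prop1Aux.Hfun lam g Λ)) x := rfl
      set a : ℕ → ℝ≥0∞ := fun m => Prop1Aux.powG lam g (m+1) (Λ.indicator 1) x with ha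
      set b : ℕ → ℝ≥0∞ := fun m => Prop1Aux.powG lam g (m+1) u x with hb
      have hble : ∀ m, b m ≤ a m := fun m => Prop1Aux.powG_mono (m+1) huind x
      have hTx : ∑' m, a m ≠ ∞ := by
        have h7 : (Λ.indicator 1 : R → ℝ≥0∞) x
            * ∑' m, Prop1Aux.powG lam g (m+1) (Λ.indicator 1) x < ∞ := hxT
        rw [hχx, one_mul] at h7
        exact h7.ne
      have hbne : ∑' m, b m ≠ ∞ :=
        ((ENNReal.tsum_le_tsum hble).trans_lt (lt_top_iff_ne_top.mpr hTx)).ne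
      have hsub : ∀ m, Prop1Aux.powG lam g (m+1)
          (fun y => (Λ.indicator 1 : R → ℝ≥0∞) y - u y) x = a m - b m :=
        fun m => Prop1Aux.powG_sub hg hgint hΛm humeas huind m x
      have hAB : ∑' m, (a m - b m) = u x := by
        rw [ENNReal.tsum_sub hbne hble]
        have hid : ∑' m, a m = u x + ∑' m, b m :=
          Prop1Aux.identityA (lam := lam) hg hΛm hx
        rw [hid]
        exact ENNReal.add_sub_cancel_right hbne
      have htend : Tendsto (fun n => ∑ m ∈ Finset.range n, (a m - b m)) atTop
          (nhds (u x)) := by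
        have := ENNReal.tendsto_nat_tsum (fun m => a m - b m)
        rwa [hAB] at this
      have htendR : Tendsto (fun n => (∑ m ∈ Finset.range n, (a m - b m)).toReal) atTop
          (nhds ((u x).toReal)) :=
        (ENNReal.tendsto_toReal (hune x)).comp htend
      apply htendR.congr
      intro n
      rw [hxS n, hχx, one_mul]
      congr 1
      exact (Finset.sum_congr rfl fun m _ => hsub m).symm
    · have hχx : (Λ.indicator 1 : R → ℝ≥0∞) x = 0 := Set.indicator_of_notMem hx _
      have hux : u x = 0 := Set.indicator_of_notMem hx _
      rw [hux]
      simp only [ENNReal.toReal_zero]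
      apply Tendsto.congr (f₁ := fun _ => (0:ℝ))
      · intro n
        rw [hxS n, hχx, zero_mul, ENNReal.toReal_zero]
      · exact tendsto_const_nhds
  -- identify `KΛ Ψ` with `u.toReal`
  have hKid : (KΛ Ψ : R → ℝ) =ᵐ[lam] fun x => (u x).toReal := by
    have hLp : Tendsto (fun n => S n Ψ) atTop (nhds (KΛ Ψ)) := hKΛ Ψ
    have hmeas : TendstoInMeasure lam (fun n => (S n Ψ : R → ℝ)) atTop (KΛ Ψ) :=
      tendstoInMeasure_of_tendsto_Lp hLp
    obtain ⟨ns, hns, hae⟩ := hmeas.exists_seq_tendsto_ae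
    filter_upwards [hae, hptlim] with x hx1 hx2
    have h1 : Tendsto (fun i => (S (ns i) Ψ : R → ℝ) x) atTop
        (nhds ((u x).toReal)) := hx2.comp hns.tendsto_atTop
    exact tendsto_nhds_unique hx1 h1
  -- `(1 + KΛ) Ψ = χL`
  have hsum : (1 + KΛ) Ψ = χL := by
    apply Lp.ext
    have h1 : ((1 + KΛ) Ψ : R → ℝ) =ᵐ[lam] fun x => (Ψ : R → ℝ) x + (KΛ Ψ : R → ℝ) x := by
      have : (1 + KΛ) Ψ = Ψ + KΛ Ψ := by
        rw [ContinuousLinearMap.add_apply, ContinuousLinearMap.one_apply]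
      rw [this]
      filter_upwards [Lp.coeFn_add Ψ (KΛ Ψ)] with x hx
      exact hx
    filter_upwards [h1, hΨcoe, hKid, hχcoe] with x hx1 hx2 hx3 hx4
    rw [hx1, hx2, hx3, hx4]
    have h5 : ((Λ.indicator 1 : R → ℝ≥0∞) x - u x) + u x
        = (Λ.indicator 1 : R → ℝ≥0∞) x := tsub_add_cancel_of_le (huind x)
    have h6 : ρ x + (u x).toReal
        = (((Λ.indicator 1 : R → ℝ≥0∞) x - u x) + u x).toReal := by
      rw [ENNReal.toReal_add (hsub_ne x) (hune x)]
    rw [h6, h5]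
    by_cases hx : x ∈ Λ <;>
      simp [Set.indicator_of_mem, Set.indicator_of_notMem, hx]
  -- conclude
  have hJΨ : J χL = Ψ := by
    calc J χL = J ((1 + KΛ) Ψ) := by rw [hsum]
      _ = (J.comp (1 + KΛ)) Ψ := rfl
      _ = Ψ := by rw [hJl]; rfl
  rw [hJΨ]
  filter_upwards [hΨcoe] with x hx
  rw [hx]
  exact hρ0 x
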